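/- For every integer n ≥ 2, the number of flattened Catalan words of length n containing no levels (no index i with π_i = π_{i+1}) is 2^(n-2). -/

import Mathlib

open scoped BigOperators

/-- `w` is a Catalan word: it is nonempty, starts with `1`, and each subsequent
letter lies between `1` and the previous letter plus one. -/
def IsCatalan (w : List ℕ) : Prop :=
  w ≠ [] ∧ w.getD 0 0 = 1 ∧
    ∀ i, i + 1 < w.length →
      1 ≤ w.getD (i + 1) 0 ∧ w.getD (i + 1) 0 ≤ w.getD i 0 + 1

/-- `i` is the starting index of a maximal weakly increasing run of `w`. -/
def RunStart (w : List ℕ) (i : ℕ) : Prop :=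
  i < w.length ∧ (i = 0 ∨ w.getD i 0 < w.getD (i - 1) 0)

/-- `w` is flattened: the first letters of its increasing runs, read left to
right, form a weakly nondecreasing sequence. -/
def IsFlattened (w : List ℕ) : Prop :=
  ∀ i j, RunStart w i → RunStart w j → i ≤ j → w.getD i 0 ≤ w.getD j 0

/-- The set of flattened Catalan words of length `n`. -/
def FlatCat (n : ℕ) : Set (List ℕ) :=
  {w | w.length = n ∧ IsCatalan w ∧ IsFlattened w}

/-- `i` is the starting index of an occurrence of the consecutive pattern `τ`
in the word `w`, i.e. the factor of `w` of length `|τ|` starting at `i` is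
order-isomorphic to `τ`. -/
def OccAt (τ w : List ℕ) (i : ℕ) : Prop :=
  i + τ.length ≤ w.length ∧
    ∀ s < τ.length, ∀ t < τ.length,
      (w.getD (i + s) 0 < w.getD (i + t) 0 ↔ τ.getD s 0 < τ.getD t 0)

/-- The number of occurrences of the consecutive pattern `τ` in `w`. -/
noncomputable def numOcc (τ w : List ℕ) : ℕ :=
  Set.ncard {i | OccAt τ w i}

/-- The number of distinct letters in the terminal (rightmost) increasing run
of `w`, i.e. in the longest weakly increasing suffix of `w`. -/
noncomputable def trun (w : List ℕ) : ℕ :=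
  ((w.drop (sInf {i | List.Chain' (· ≤ ·) (w.drop i)})).toFinset).card

/-- The total number of occurrences of the consecutive pattern `τ` over all
flattened Catalan words of length `n`. -/
noncomputable def tot (n : ℕ) (τ : List ℕ) : ℕ :=
  ∑ᶠ w ∈ FlatCat n, numOcc τ w


namespace FlatAux


def Good : ℕ → ℕ → List ℕ → Prop
  | _, _, [] => True
  | a, c, x :: t => (x = c + 1 ∧ Good a (c + 1) t) ∨ (a ≤ x ∧ x < c ∧ Good x x t)

def Aseed (a : ℕ) (u : ℕ → ℕ) : ℕ → ℕ
  | 0 => a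
  | i + 1 => if u (i + 1) < u i then u (i + 1) else Aseed a u i

lemma aseed_shift (a c x : ℕ) (s : List ℕ) :
    ∀ i, Aseed a (fun j => (c :: x :: s).getD j 0) (i + 1)
      = Aseed (if x < c then x else a) (fun j => (x :: s).getD j 0) i := by
  intro i
  induction i with
  | zero => simp [Aseed]
  | succ i ih =>
      show (if _ then _ else _) = (if _ then _ else _)
      simp only [List.getD_cons_succ]
      rw [ih]

lemma good_iff : ∀ (t : List ℕ) (a c : ℕ),
    Good a c t ↔ ∀ i, i + 1 < (c :: t).length →
      ((c :: t).getD (i+1) 0 = (c :: t).getD i 0 + 1 ∨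
       (Aseed a (fun j => (c :: t).getD j 0) i ≤ (c :: t).getD (i+1) 0 ∧
        (c :: t).getD (i+1) 0 < (c :: t).getD i 0)) := by
  intro t
  induction t with
  | nil => intro a c; simp [Good]
  | cons x s ih =>
      intro a c
      constructor
      · rintro (⟨rfl, hg⟩ | ⟨h1, h2, hg⟩) i hi
        · rcases i with _ | i
          · left; simp [Aseed]
          · have := (ih a (c+1)).mp hg i (by simpa using hi)
            rw [aseed_shift]
            simp only [List.getD_cons_succ]
            have hx : ¬ (c + 1 < c) := by omega
            rw [if_neg hx]
            simpa using this
        · rcases i with _ | i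
          · right; simp [Aseed]; omega
          · have := (ih x x).mp hg i (by simpa using hi)
            rw [aseed_shift, if_pos h2]
            simpa using this
      · intro h
        have h0 := h 0 (by simp)
        simp only [List.getD_cons_succ, List.getD_cons_zero] at h0
        have h0' : x = c + 1 ∨ (a ≤ x ∧ x < c) := by
          rcases h0 with h0 | h0
          · left; exact h0
          · right; exact ⟨le_trans (by simp [Aseed]) h0.1, h0.2⟩
        rcases h0' with rfl | ⟨h1, h2⟩
        · left
          refine ⟨rfl, (ih a (c+1)).mpr ?_⟩
          intro i hi
          have := h (i+1) (by simpa using hi)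
          rw [aseed_shift] at this
          have hx : ¬ (c + 1 < c) := by omega
          rw [if_neg hx] at this
          simpa using this
        · right
          refine ⟨h1, h2, (ih x x).mpr ?_⟩
          intro i hi
          have := h (i+1) (by simpa using hi)
          rw [aseed_shift, if_pos h2] at this
          simpa using this

section L
variable (u : ℕ → ℕ) (n a : ℕ)

def Lcond : Prop :=
  ∀ i, i + 1 < n → (u (i+1) = u i + 1 ∨ (Aseed a u i ≤ u (i+1) ∧ u (i+1) < u i))

variable {u n a}

lemma aseed_le_succ (hL : Lcond u n a) {i : ℕ} (hi : i + 1 < n) :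
    Aseed a u i ≤ Aseed a u (i+1) := by
  rcases hL i hi with h | ⟨h1, h2⟩
  · show _ ≤ (if _ then _ else _)
    rw [if_neg (by omega)]
  · show _ ≤ (if _ then _ else _)
    rw [if_pos h2]; exact h1

lemma aseed_mono (hL : Lcond u n a) : ∀ {i j : ℕ}, i ≤ j → j < n →
    Aseed a u i ≤ Aseed a u j := by
  intro i j hij hj
  induction j with
  | zero => simpa [Nat.le_zero.mp hij]
  | succ j ihj =>
      rcases Nat.lt_or_ge i (j+1) with h | h
      · exact le_trans (ihj (by omega) (by omega)) (aseed_le_succ hL hj)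
      · have : i = j + 1 := by omega
        simp [this]

lemma aseed_le_self (hL : Lcond u n a) (h0 : a ≤ u 0) :
    ∀ i, i < n → Aseed a u i ≤ u i := by
  intro i
  induction i with
  | zero => intro _; simpa [Aseed]
  | succ i ihi =>
      intro hi
      rcases hL i hi with h | ⟨h1, h2⟩
      · show (if _ then _ else _) ≤ _
        rw [if_neg (by omega)]
        have := ihi (by omega); omega
      · show (if _ then _ else _) ≤ _
        rw [if_pos h2]

end L

def F : ℕ → ℕ → ℕ → Finset (List ℕ)
  | 0, _, _ => {[]}
  | m + 1, a, c =>
      ((F m a (c+1)).image (fun t => (c+1) :: t)) ∪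
        (Finset.Ico a c).biUnion (fun x => (F m x x).image (fun t => x :: t))

lemma mem_F : ∀ (m a c : ℕ) (t : List ℕ), t ∈ F m a c ↔ t.length = m ∧ Good a c t := by
  intro m
  induction m with
  | zero =>
      intro a c t
      simp only [F, Finset.mem_singleton]
      constructor
      · rintro rfl; exact ⟨rfl, trivial⟩
      · rintro ⟨h, _⟩; exact List.length_eq_zero_iff.mp h
  | succ m ih =>
      intro a c t
      simp only [F, Finset.mem_union, Finset.mem_image, Finset.mem_biUnion, Finset.mem_Ico, ih]
      constructor
      · rintro (⟨t', ⟨hl, hg⟩, rfl⟩ | ⟨x, ⟨hx1, hx2⟩, t', ⟨hl, hg⟩, rfl⟩)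
        · exact ⟨by simp [hl], Or.inl ⟨rfl, hg⟩⟩
        · exact ⟨by simp [hl], Or.inr ⟨hx1, hx2, hg⟩⟩
      · rintro ⟨hl, hg⟩
        rcases t with _ | ⟨y, s⟩
        · simp at hl
        · rcases hg with ⟨rfl, hg⟩ | ⟨h1, h2, hg⟩
          · exact Or.inl ⟨s, ⟨by simpa using hl, hg⟩, rfl⟩
          · exact Or.inr ⟨y, ⟨h1, h2⟩, s, ⟨by simpa using hl, hg⟩, rfl⟩

lemma card_F : ∀ (m a c : ℕ), a ≤ c →
    (F m a c).card = if m = 0 then 1 else 2 ^ (m - 1) * (c - a + 1) := by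
  intro m
  induction m with
  | zero => intro a c _; simp [F]
  | succ m ih =>
      intro a c hac
      have hdisj : Disjoint ((F m a (c+1)).image (fun t => (c+1) :: t))
          ((Finset.Ico a c).biUnion (fun x => (F m x x).image (fun t => x :: t))) := by
        rw [Finset.disjoint_left]
        rintro t ht ht'
        simp only [Finset.mem_image] at ht
        simp only [Finset.mem_biUnion, Finset.mem_image, Finset.mem_Ico] at ht'
        obtain ⟨t1, _, rfl⟩ := ht
        obtain ⟨x, ⟨_, hx⟩, t2, _, heq⟩ := ht'
        have : x = c + 1 := by
          have := congrArg (fun l => l.headI) heq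
          simpa using this
        omega
      rw [show F (m+1) a c = ((F m a (c+1)).image (fun t => (c+1) :: t)) ∪ (Finset.Ico a c).biUnion (fun x => (F m x x).image (fun t => x :: t)) from rfl,
        Finset.card_union_of_disjoint hdisj,
        Finset.card_image_of_injective _ (List.cons_injective),
        Finset.card_biUnion]
      · have hsum : ∑ x ∈ Finset.Ico a c, ((F m x x).image (fun t => x :: t)).card
            = (c - a) * (if m = 0 then 1 else 2 ^ (m-1)) := by
          have hterm : ∀ x ∈ Finset.Ico a c,
              ((F m x x).image (fun t => x :: t)).card = (if m = 0 then 1 else 2 ^ (m-1)) := by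
            intro x _
            rw [Finset.card_image_of_injective _ (List.cons_injective), ih x x le_rfl]
            simp
          rw [Finset.sum_congr rfl hterm, Finset.sum_const, Nat.card_Ico, smul_eq_mul]
        rw [hsum, ih a (c+1) (by omega)]
        rcases m with _ | k
        · simp only [if_pos rfl, Nat.one_ne_zero]
          simp
          omega
        · have h1 : c + 1 - a = (c - a) + 1 := by omega
          simp only [Nat.succ_ne_zero, if_false, Nat.succ_sub_one, h1, Nat.add_sub_cancel,
            pow_succ]
          ring
      · intro x hx y hy hxy
        rw [Function.onFun, Finset.disjoint_left]
        rintro t ht ht'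
        simp only [Finset.mem_image] at ht ht'
        obtain ⟨t1, _, rfl⟩ := ht
        obtain ⟨t2, _, heq⟩ := ht'
        have hh : y = x := by simpa using congrArg (fun l => l.headI) heq
        exact hxy hh.symm


lemma exists_runstart (w : List ℕ) (hw0 : w.getD 0 0 = 1) :
    ∀ i, i < w.length → ∃ r, r ≤ i ∧ RunStart w r ∧
      w.getD r 0 = Aseed 1 (fun j => w.getD j 0) i := by
  intro i
  induction i with
  | zero =>
      intro hi
      exact ⟨0, le_rfl, ⟨hi, Or.inl rfl⟩, by simpa [Aseed] using hw0⟩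
  | succ i ih =>
      intro hi
      by_cases h : w.getD (i+1) 0 < w.getD i 0
      · refine ⟨i+1, le_rfl, ⟨hi, Or.inr ?_⟩, ?_⟩
        · simpa using h
        · show _ = (if _ then _ else _)
          rw [if_pos h]
      · obtain ⟨r, hr, hrs, hrv⟩ := ih (by omega)
        refine ⟨r, by omega, hrs, ?_⟩
        show _ = (if _ then _ else _)
        rw [if_neg h]
        exact hrv

lemma mem_iff (n : ℕ) (hn : 2 ≤ n) (w : List ℕ) :
    (w ∈ FlatCat n ∧ ∀ i, i + 1 < w.length → w.getD i 0 ≠ w.getD (i + 1) 0)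
      ↔ ∃ t, t.length = n - 1 ∧ Good 1 1 t ∧ w = 1 :: t := by
  constructor
  · rintro ⟨⟨hlen, ⟨hne, h0, hcat⟩, hflat⟩, hnl⟩
    obtain ⟨w0, t, rfl⟩ : ∃ w0 t, w = w0 :: t := by
      cases w with
      | nil => exact absurd rfl hne
      | cons w0 t => exact ⟨w0, t, rfl⟩
    have hw0 : w0 = 1 := by simpa using h0
    subst hw0
    refine ⟨t, by simp at hlen ⊢; omega, ?_, rfl⟩
    rw [good_iff]
    intro i hi
    rcases eq_or_ne ((1 :: t).getD (i+1) 0) ((1 :: t).getD i 0 + 1) with he | he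
    · exact Or.inl he
    · right
      have hb := hcat i hi
      have hlt : (1 :: t).getD (i+1) 0 < (1 :: t).getD i 0 := by
        have := hnl i hi
        omega
      obtain ⟨r, hr, hrs, hrv⟩ := exists_runstart (1 :: t) h0 i (by omega)
      have hrs' : RunStart (1 :: t) (i+1) := ⟨hi, Or.inr (by simpa using hlt)⟩
      have := hflat r (i+1) hrs hrs' (by omega)
      rw [hrv] at this
      exact ⟨this, hlt⟩
  · rintro ⟨t, hlen, hg, rfl⟩
    have hL : ∀ i, i + 1 < (1 :: t).length →
        ((1 :: t).getD (i+1) 0 = (1 :: t).getD i 0 + 1 ∨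
         (Aseed 1 (fun j => (1 :: t).getD j 0) i ≤ (1 :: t).getD (i+1) 0 ∧
          (1 :: t).getD (i+1) 0 < (1 :: t).getD i 0)) := (good_iff t 1 1).mp hg
    have hL' : Lcond (fun j => (1 :: t).getD j 0) ((1 :: t).length) 1 := hL
    have hA1 : ∀ i, i < (1 :: t).length → 1 ≤ Aseed 1 (fun j => (1 :: t).getD j 0) i := by
      intro i hi
      have := aseed_mono hL' (Nat.zero_le i) hi
      simpa [Aseed] using this
    have hlen' : (1 :: t).length = n := by simp [hlen]; omega
    have hkey : ∀ k, RunStart (1 :: t) k →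
        (1 :: t).getD k 0 = Aseed 1 (fun j => (1 :: t).getD j 0) k := by
      rintro k ⟨hk, hk2⟩
      rcases k with _ | k
      · simp [Aseed]
      · have hlt : (1 :: t).getD (k+1) 0 < (1 :: t).getD k 0 := by
          rcases hk2 with h | h
          · exact absurd h (Nat.succ_ne_zero k)
          · simpa using h
        show _ = (if _ then _ else _)
        rw [if_pos hlt]
    refine ⟨⟨hlen', ⟨List.cons_ne_nil _ _, by simp, ?_⟩, ?_⟩, ?_⟩
    · intro i hi
      rcases hL i hi with h | ⟨h1, h2⟩
      · constructor
        · rw [h]; omega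
        · rw [h]
      · have := hA1 i (by omega)
        constructor
        · omega
        · omega
    · intro i j hi hj hij
      rw [hkey i hi, hkey j hj]
      exact aseed_mono hL' hij hj.1
    · intro i hi
      rcases hL i hi with h | ⟨h1, h2⟩
      · omega
      · omega

end FlatAux

/-- For every integer `n ≥ 2`, the number of flattened Catalan words of length
`n` containing no levels is `2^(n-2)`. -/
theorem flatCat_no_levels_ncard (n : ℕ) (hn : 2 ≤ n) :
    {w ∈ FlatCat n | ∀ i, i + 1 < w.length → w.getD i 0 ≠ w.getD (i + 1) 0}.ncard
      = 2 ^ (n - 2) := by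
  have hset : {w ∈ FlatCat n | ∀ i, i + 1 < w.length → w.getD i 0 ≠ w.getD (i + 1) 0}
      = ↑((FlatAux.F (n-1) 1 1).image (fun t => 1 :: t)) := by
    ext w
    simp only [Set.mem_setOf_eq, Finset.coe_image, Set.mem_image, Finset.mem_coe,
      FlatAux.mem_F]
    rw [show (w ∈ FlatCat n ∧ ∀ i, i + 1 < w.length → w.getD i 0 ≠ w.getD (i + 1) 0) ↔ _
      from FlatAux.mem_iff n hn w]
    constructor
    · rintro ⟨t, h1, h2, rfl⟩; exact ⟨t, ⟨h1, h2⟩, rfl⟩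
    · rintro ⟨t, ⟨h1, h2⟩, rfl⟩; exact ⟨t, h1, h2, rfl⟩
  rw [hset, Set.ncard_coe_finset, Finset.card_image_of_injective _ List.cons_injective,
    FlatAux.card_F (n-1) 1 1 le_rfl, if_neg (by omega)]
  have h2 : n - 1 - 1 = n - 2 := by omega
  simp [h2]
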